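/- Let M be a matroid with weight function w': U → ℝ, and let V, R be independent sets of equal cardinality such that R has maximum weight among all |R|-element independent subsets of V ∪ R. Then there exists a bijection φ: V → R such that for every v ∈ V, (R \ {φ(v)}) ∪ {v} is independent and w'(φ(v)) ≥ w'(v). -/

import Mathlib

open Set

private lemma card_le_of_indep_subset_closure {α : Type*} [DecidableEq α] (M : Matroid α)
    {A X : Finset α} (hA : M.Indep (A : Set α)) (hX : M.Indep (X : Set α))
    (h : (A : Set α) ⊆ M.closure (X : Set α)) : A.card ≤ X.card := by
  obtain ⟨J, hJ, hAJ⟩ := hA.subset_isBasis_of_subset h (M.closure_subset_ground _)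
  have h1 : (A : Set α).encard ≤ J.encard := Set.encard_mono hAJ
  have h2 : J.encard = (X : Set α).encard := hJ.encard_eq_encard hX.isBasis_closure
  rw [h2, Set.encard_coe_eq_coe_finsetCard, Set.encard_coe_eq_coe_finsetCard,
    Nat.cast_le] at h1
  exact h1

theorem stmt6 {α : Type*} [DecidableEq α] (M : Matroid α) (w' : α → ℝ) (V R : Finset α)
    (hV : M.Indep (V : Set α)) (hR : M.Indep (R : Set α))
    (hcard : V.card = R.card)
    (hmax : ∀ R' : Finset α, (R' : Set α) ⊆ (V : Set α) ∪ (R : Set α) →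
      M.Indep (R' : Set α) → R'.card = R.card → ∑ e ∈ R', w' e ≤ ∑ e ∈ R, w' e) :
    ∃ φ : {x // x ∈ V} → {x // x ∈ R}, Function.Bijective φ ∧
      ∀ v : {x // x ∈ V},
        M.Indep (((R : Set α) \ {(φ v : α)}) ∪ {(v : α)}) ∧ w' (v : α) ≤ w' (φ v : α) := by
  classical
  have hVE : (V : Set α) ⊆ M.E := hV.subset_ground
  set t : α → Finset α := fun v =>
    if v ∈ R then {v} else R.filter (fun r => M.Indep (((R : Set α) \ {r}) ∪ {v})) with ht
  have htR : ∀ v, t v ⊆ R := by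
    intro v; rw [ht]; dsimp only; split
    · intro x hx; rwa [Finset.mem_singleton.mp hx]
    · exact Finset.filter_subset _ _
  -- key claim
  have hkey : ∀ v ∈ V, t v = R ∨ (v : α) ∈ M.closure ((t v : Finset α) : Set α) := by
    intro v hv
    by_cases hvR : v ∈ R
    · right
      have h1 : t v = {v} := if_pos hvR
      rw [h1]
      exact M.subset_closure _ (by simpa using hVE hv) (by simp)
    by_cases hvcl : (v : α) ∈ M.closure (R : Set α)
    · -- span argument
      set D := R \ t v with hD
      by_cases hDe : D = ∅
      · left
        exact subset_antisymm (htR v) (Finset.sdiff_eq_empty_iff_subset.mp hDe)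
      right
      have hDne : ((D : Finset α) : Set α).Nonempty := by
        rw [Finset.coe_nonempty]
        exact Finset.nonempty_iff_ne_empty.mpr hDe
      have hclD : ∀ r ∈ (D : Finset α), (v : α) ∈ M.closure ((R : Set α) \ {r}) := by
        intro r hr
        have hrR : r ∈ R := (Finset.mem_sdiff.mp hr).1
        have hrn : r ∉ t v := (Finset.mem_sdiff.mp hr).2
        have hnind : ¬ M.Indep (((R : Set α) \ {r}) ∪ {(v : α)}) := by
          intro hind
          refine hrn ?_
          rw [ht]
          simp only [hvR, if_false, Finset.mem_filter]
          exact ⟨hrR, hind⟩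
        have hIndsub : M.Indep ((R : Set α) \ {r}) := hR.subset diff_subset
        by_contra hnot
        have hvmem : (v : α) ∉ (R : Set α) \ {r} := fun h => hvR (by exact_mod_cast h.1)
        have := (hIndsub.notMem_closure_iff_of_notMem hvmem (hVE hv)).mp hnot
        rw [Set.union_singleton] at hnind
        exact hnind this
      have hUnion : M.Indep (⋃ r ∈ ((D : Finset α) : Set α), ((R : Set α) \ {r})) := by
        refine hR.subset ?_
        simp only [iUnion_subset_iff]
        intro r _
        exact diff_subset
      have hInter := M.closure_biInter_eq_biInter_closure_of_biUnion_indep hDne hUnion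
      have hIcap : (⋂ r ∈ ((D : Finset α) : Set α), ((R : Set α) \ {r}))
          = ((t v : Finset α) : Set α) := by
        obtain ⟨r0, hr0⟩ := hDne
        ext x
        simp only [mem_iInter, Set.mem_diff, Set.mem_singleton_iff, Finset.mem_coe, hD,
          Finset.mem_sdiff]
        constructor
        · intro h
          have hr0' : r0 ∈ R ∧ r0 ∉ t v := by
            have := Finset.mem_coe.mp hr0
            rw [hD, Finset.mem_sdiff] at this
            exact this
          have hx : x ∈ R := (h r0 hr0').1
          by_contra hxt
          exact (h x ⟨hx, hxt⟩).2 rfl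
        · intro hx r hr
          exact ⟨htR v hx, fun he => hr.2 (he ▸ hx)⟩
      rw [hIcap] at hInter
      rw [hInter]
      exact mem_iInter₂.mpr hclD
    · left
      have hins : M.Indep (insert (v : α) (R : Set α)) := by
        rw [hR.insert_indep_iff_of_notMem (by exact_mod_cast hvR)]
        exact ⟨hVE hv, hvcl⟩
      rw [ht]
      simp only [hvR, if_false]
      refine subset_antisymm (Finset.filter_subset _ _) ?_
      intro r hr
      rw [Finset.mem_filter]
      refine ⟨hr, hins.subset ?_⟩
      rw [Set.union_singleton]
      exact insert_subset_insert diff_subset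
  -- Hall's condition
  have hHall : ∀ s : Finset {x // x ∈ V}, s.card ≤ (s.biUnion (fun v => t ↑v)).card := by
    intro s
    have hscard : s.card ≤ V.card := by
      have := Finset.card_le_univ s
      simpa [Fintype.card_coe] using this.trans_eq (Finset.card_univ.trans (Fintype.card_coe V))
    by_cases hall : ∃ v ∈ s, t (v : α) = R
    · obtain ⟨v, hvs, hvt⟩ := hall
      have h1 : R ⊆ s.biUnion (fun v => t ↑v) := by
        rw [← hvt]
        exact Finset.subset_biUnion_of_mem (fun v : {x // x ∈ V} => t ↑v) hvs
      calc s.card ≤ V.card := hscard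
        _ = R.card := hcard
        _ ≤ _ := Finset.card_le_card h1
    · push_neg at hall
      set U := s.biUnion (fun v => t ↑v) with hU
      have hUind : M.Indep ((U : Finset α) : Set α) := hR.subset (by
        intro y hy
        rw [Finset.mem_coe, hU, Finset.mem_biUnion] at hy
        obtain ⟨v, _, hy⟩ := hy
        exact htR _ hy)
      have hAind : M.Indep ((s.image Subtype.val : Finset α) : Set α) := hV.subset (by
        intro x hx
        simp only [Finset.coe_image, Set.mem_image, Finset.mem_coe] at hx
        obtain ⟨v, _, rfl⟩ := hx
        exact v.2)
      have hsub : ((s.image Subtype.val : Finset α) : Set α) ⊆ M.closure ((U : Finset α) : Set α) := by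
        intro x hx
        simp only [Finset.coe_image, Set.mem_image, Finset.mem_coe] at hx
        obtain ⟨v, hvs, rfl⟩ := hx
        rcases hkey (↑v) v.2 with h | h
        · exact absurd h (hall v hvs)
        · refine M.closure_subset_closure ?_ h
          intro y hy
          rw [Finset.mem_coe] at hy ⊢
          rw [hU, Finset.mem_biUnion]
          exact ⟨v, hvs, hy⟩
      have hle := card_le_of_indep_subset_closure M hAind hUind hsub
      rw [Finset.card_image_of_injective s Subtype.val_injective] at hle
      exact hle
  obtain ⟨f, hfinj, hft⟩ := (Finset.all_card_le_biUnion_card_iff_existsInjective'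
    (fun v : {x // x ∈ V} => t ↑v)).mp hHall
  refine ⟨fun v => ⟨f v, htR _ (hft v)⟩, ?_, ?_⟩
  · rw [Fintype.bijective_iff_injective_and_card]
    constructor
    · intro a b hab
      exact hfinj (congrArg Subtype.val hab)
    · simp [Fintype.card_coe, hcard]
  · intro v
    have hfv := hft v
    by_cases hvR : (v : α) ∈ R
    · have h1 : t ↑v = {(v : α)} := if_pos hvR
      rw [h1, Finset.mem_singleton] at hfv
      simp only [hfv]
      constructor
      · rw [Set.diff_union_self, Set.union_eq_self_of_subset_right (by
          simpa using hvR)]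
        exact hR
      · exact le_refl _
    · have h1 : t ↑v = R.filter (fun r => M.Indep (((R : Set α) \ {r}) ∪ {(v : α)})) :=
        if_neg hvR
      rw [h1, Finset.mem_filter] at hfv
      obtain ⟨hfR, hfind⟩ := hfv
      refine ⟨hfind, ?_⟩
      -- weight via hmax
      set r := f v with hr
      set R' := insert (v : α) (R.erase r) with hR'
      have hvns : (v : α) ∉ R.erase r := fun h => hvR (Finset.mem_of_mem_erase h)
      have hcoe : (R' : Set α) = ((R : Set α) \ {r}) ∪ {(v : α)} := by
        rw [hR', Finset.coe_insert, Finset.coe_erase, Set.union_singleton]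
      have hsum := hmax R' (by
          rw [hcoe]
          intro x hx
          rcases hx with hx | hx
          · exact Or.inr hx.1
          · rw [Set.mem_singleton_iff] at hx
            exact Or.inl (by rw [hx]; exact_mod_cast v.2))
        (by rw [hcoe]; exact hfind)
        (by
          rw [hR', Finset.card_insert_of_notMem hvns, Finset.card_erase_of_mem hfR]
          have : 0 < R.card := Finset.card_pos.mpr ⟨r, hfR⟩
          omega)
      rw [hR', Finset.sum_insert hvns] at hsum
      have hsr : ∑ e ∈ R.erase r, w' e + w' r = ∑ e ∈ R, w' e :=
        Finset.sum_erase_add _ _ hfR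
      linarith
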